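/- Let S ⊆ ℝⁿ be a nonempty convex set, L > 0, ν ∈ (0,1], and h a convex differentiable function whose gradient is (ν,L)-Hölder on S. If x, y ∈ S are such that both y − d_{x,y}/L^{1/ν} ∈ S and x + d_{x,y}/L^{1/ν} ∈ S, where d_{x,y} := ‖∇h(y) − ∇h(x)‖^{(1−ν)/ν}(∇h(y) − ∇h(x)), then ⟨∇h(y) − ∇h(x), y − x⟩ ≥ (2ν/((1+ν)L^{1/ν}))‖∇h(y) − ∇h(x)‖^{(1+ν)/ν}. -/

import Mathlib

open Set Metric
open scoped InnerProductSpace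

lemma line_deriv {E : Type*} [NormedAddCommGroup E] [InnerProductSpace ℝ E] [CompleteSpace E]
    (h : E → ℝ) (gp : E) (a v : E) (t : ℝ)
    (hg : HasGradientAt h gp (a + t • v)) :
    HasDerivAt (fun s : ℝ => h (a + s • v)) ⟪gp, v⟫_ℝ t := by
  have hl : HasDerivAt (fun s : ℝ => a + s • v) v t := by
    simpa using ((hasDerivAt_id t).smul_const v).const_add a
  have := (hasGradientAt_iff_hasFDerivAt.mp hg).comp_hasDerivAt t hl
  simpa [InnerProductSpace.toDual_apply_apply, Function.comp_def] using this

-- subgradient inequality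
lemma subgrad {E : Type*} [NormedAddCommGroup E] [InnerProductSpace ℝ E] [CompleteSpace E]
    {S : Set E} (hSconv : Convex ℝ S) {h : E → ℝ} (hconv : ConvexOn ℝ S h)
    {a b ga : E} (ha : a ∈ S) (hb : b ∈ S) (hg : HasGradientAt h ga a) :
    h a + ⟪ga, b - a⟫_ℝ ≤ h b := by
  have hD : HasDerivAt (fun s : ℝ => h (a + s • (b - a))) ⟪ga, b - a⟫_ℝ 0 := by
    apply line_deriv
    simpa using hg
  have hslope : Filter.Tendsto (slope (fun s : ℝ => h (a + s • (b - a))) 0) (nhdsWithin 0 {(0:ℝ)}ᶜ)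
      (nhds ⟪ga, b - a⟫_ℝ) := hasDerivAt_iff_tendsto_slope.mp hD
  have hmono : Filter.Tendsto (slope (fun s : ℝ => h (a + s • (b - a))) 0) (nhdsWithin 0 (Ioi 0))
      (nhds ⟪ga, b - a⟫_ℝ) :=
    hslope.mono_left (nhdsWithin_mono 0 (fun t (ht : t ∈ Ioi (0:ℝ)) => ne_of_gt ht))
  have hbound : ∀ᶠ t in nhdsWithin (0:ℝ) (Ioi 0),
      slope (fun s : ℝ => h (a + s • (b - a))) 0 t ≤ h b - h a := by
    filter_upwards [Ioo_mem_nhdsGT_of_mem (by norm_num : (0:ℝ) ∈ Ico (0:ℝ) 1)] with t ht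
    have ht0 : 0 < t := ht.1
    have ht1 : t ≤ 1 := le_of_lt ht.2
    have key : h (a + t • (b - a)) ≤ (1 - t) * h a + t * h b := by
      have := hconv.2 ha hb (by linarith : (0:ℝ) ≤ 1 - t) (le_of_lt ht0) (by ring)
      have heq : (1 - t) • a + t • b = a + t • (b - a) := by
        module
      simpa [heq] using this
    rw [slope_def_field]
    simp only [zero_smul, add_zero, sub_zero]
    rw [div_le_iff₀ ht0]
    nlinarith [key]
  have : ⟪ga, b - a⟫_ℝ ≤ h b - h a := le_of_tendsto hmono hbound
  linarith

lemma descent {E : Type*} [NormedAddCommGroup E] [InnerProductSpace ℝ E] [CompleteSpace E]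
    {S : Set E} (hSconv : Convex ℝ S) {L ν : ℝ} (hL : 0 < L) (hν : ν ∈ Set.Ioc (0:ℝ) 1)
    {h : E → ℝ} {g : E → E} (hgrad : ∀ x ∈ S, HasGradientAt h (g x) x)
    (hhold : ∀ x ∈ S, ∀ y ∈ S, ‖g x - g y‖ ≤ L * ‖x - y‖ ^ ν)
    {a b : E} (ha : a ∈ S) (hb : b ∈ S) :
    h b ≤ h a + ⟪g a, b - a⟫_ℝ + L / (1 + ν) * ‖b - a‖ ^ (1 + ν) := by
  obtain ⟨hν0, hν1⟩ := hν
  set v := b - a with hv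
  have hmemt : ∀ t ∈ Icc (0:ℝ) 1, a + t • v ∈ S := by
    intro t ht
    have := hSconv ha hb (by linarith [ht.2] : (0:ℝ) ≤ 1 - t) ht.1 (by ring)
    have heq : (1 - t) • a + t • b = a + t • v := by rw [hv]; module
    rwa [heq] at this
  set φ : ℝ → ℝ := fun t => h (a + t • v) - t * ⟪g a, v⟫_ℝ - L / (1 + ν) * ‖v‖ ^ (1 + ν) * t ^ (1 + ν) with hφ
  set φ' : ℝ → ℝ := fun t => ⟪g (a + t • v), v⟫_ℝ - ⟪g a, v⟫_ℝ - L * ‖v‖ ^ (1 + ν) * t ^ ν with hφ'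
  have hder : ∀ t ∈ Icc (0:ℝ) 1, HasDerivAt φ (φ' t) t := by
    intro t ht
    have h1 : HasDerivAt (fun s : ℝ => h (a + s • v)) ⟪g (a + t • v), v⟫_ℝ t :=
      line_deriv h _ a v t (hgrad _ (hmemt t ht))
    have h2 : HasDerivAt (fun s : ℝ => s * ⟪g a, v⟫_ℝ) ⟪g a, v⟫_ℝ t := by
      simpa using (hasDerivAt_id t).mul_const ⟪g a, v⟫_ℝ
    have h3 : HasDerivAt (fun s : ℝ => s ^ (1 + ν)) ((1 + ν) * t ^ ν) t := by
      have := Real.hasDerivAt_rpow_const (x := t) (p := 1 + ν) (Or.inr (by linarith))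
      simpa using this
    have h4 := (h1.sub h2).sub ((h3.const_mul (L / (1 + ν) * ‖v‖ ^ (1 + ν))))
    convert h4 using 1
    · rfl
    · rfl
    · rfl
    rw [hφ']
    field_simp
  have hcont : ContinuousOn φ (Icc 0 1) :=
    fun t ht => (hder t ht).continuousAt.continuousWithinAt
  have hnonpos : ∀ t ∈ interior (Icc (0:ℝ) 1), φ' t ≤ 0 := by
    intro t ht
    rw [interior_Icc] at ht
    have ht0 : 0 < t := ht.1
    have hmem : a + t • v ∈ S := hmemt t ⟨le_of_lt ht.1, le_of_lt ht.2⟩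
    have hC : ⟪g (a + t • v) - g a, v⟫_ℝ ≤ ‖g (a + t • v) - g a‖ * ‖v‖ :=
      real_inner_le_norm _ _
    have hH : ‖g (a + t • v) - g a‖ ≤ L * ‖(a + t • v) - a‖ ^ ν := hhold _ hmem _ ha
    have hna : ‖(a + t • v) - a‖ = t * ‖v‖ := by
      simp [norm_smul, abs_of_pos ht0]
    have hrw : (t * ‖v‖) ^ ν = t ^ ν * ‖v‖ ^ ν :=
      Real.mul_rpow (le_of_lt ht0) (norm_nonneg v)
    have hvv : ‖v‖ ^ ν * ‖v‖ = ‖v‖ ^ (1 + ν) := by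
      rw [Real.rpow_add' (norm_nonneg v) (by linarith : (1:ℝ) + ν ≠ 0)]
      rw [Real.rpow_one]; ring
    have hineq : ⟪g (a + t • v) - g a, v⟫_ℝ ≤ L * ‖v‖ ^ (1 + ν) * t ^ ν := by
      calc ⟪g (a + t • v) - g a, v⟫_ℝ ≤ ‖g (a + t • v) - g a‖ * ‖v‖ := hC
        _ ≤ L * ‖(a + t • v) - a‖ ^ ν * ‖v‖ := by
            apply mul_le_mul_of_nonneg_right hH (norm_nonneg v)
        _ = L * ‖v‖ ^ (1 + ν) * t ^ ν := by
            rw [hna, hrw, ← hvv]; ring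
    have : ⟪g (a + t • v) - g a, v⟫_ℝ = ⟪g (a + t • v), v⟫_ℝ - ⟪g a, v⟫_ℝ :=
      inner_sub_left _ _ _
    show ⟪g (a + t • v), v⟫_ℝ - ⟪g a, v⟫_ℝ - L * ‖v‖ ^ (1 + ν) * t ^ ν ≤ 0
    linarith [this ▸ hineq]
  have hanti : AntitoneOn φ (Icc 0 1) := by
    apply antitoneOn_of_hasDerivWithinAt_nonpos (convex_Icc 0 1) hcont
      (fun t ht => (hder t (interior_subset ht)).hasDerivWithinAt) hnonpos
  have := hanti (left_mem_Icc.mpr one_pos.le) (right_mem_Icc.mpr one_pos.le) one_pos.le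
  rw [hφ] at this
  simp only [zero_smul, add_zero, one_smul, zero_mul, sub_zero, Real.one_rpow, mul_one] at this
  have hb1 : a + v = b := by rw [hv]; abel
  rw [hb1] at this
  have h0 : (0:ℝ) ^ (1+ν) = 0 := Real.zero_rpow (by linarith)
  rw [h0] at this
  linarith

theorem stmt3 {n : ℕ} (S : Set (EuclideanSpace ℝ (Fin n))) (hSne : S.Nonempty)
    (hSconv : Convex ℝ S) (L ν : ℝ) (hL : 0 < L) (hν : ν ∈ Set.Ioc (0 : ℝ) 1)
    (h : EuclideanSpace ℝ (Fin n) → ℝ)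
    (g : EuclideanSpace ℝ (Fin n) → EuclideanSpace ℝ (Fin n))
    (hgrad : ∀ x ∈ S, HasGradientAt h (g x) x)
    (hconv : ConvexOn ℝ S h)
    (hhold : ∀ x ∈ S, ∀ y ∈ S, ‖g x - g y‖ ≤ L * ‖x - y‖ ^ ν)
    (x y : EuclideanSpace ℝ (Fin n)) (hx : x ∈ S) (hy : y ∈ S)
    (hmem1 : y - (L ^ (1 / ν))⁻¹ • (‖g y - g x‖ ^ ((1 - ν) / ν) • (g y - g x)) ∈ S)
    (hmem2 : x + (L ^ (1 / ν))⁻¹ • (‖g y - g x‖ ^ ((1 - ν) / ν) • (g y - g x)) ∈ S) :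
    ⟪g y - g x, y - x⟫_ℝ ≥
      2 * ν / ((1 + ν) * L ^ (1 / ν)) * ‖g y - g x‖ ^ ((1 + ν) / ν) := by
  obtain ⟨hν0, hν1⟩ := hν
  set u := g y - g x with hu
  set N := ‖u‖ with hN
  set M := L ^ (1 / ν) with hM
  have hM0 : 0 < M := Real.rpow_pos_of_pos hL _
  by_cases hu0 : u = 0
  · have hNz : N = 0 := by rw [hN, hu0, norm_zero]
    have hiz : ⟪u, y - x⟫_ℝ = 0 := by rw [hu0]; simp
    rw [hiz, hNz, Real.zero_rpow (by positivity : (1 + ν) / ν ≠ 0)]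
    simp
  have hN0 : 0 < N := norm_pos_iff.mpr hu0
  set c := M⁻¹ * N ^ ((1 - ν) / ν) with hc
  have hc0 : 0 ≤ c := by positivity
  set w := c • u with hw
  have hw_eq : (L ^ (1 / ν))⁻¹ • (‖g y - g x‖ ^ ((1 - ν) / ν) • (g y - g x)) = w := by
    rw [hw, hc, smul_smul]
  rw [hw_eq] at hmem1 hmem2
  have hnw : ‖w‖ = c * N := by
    rw [hw, norm_smul, Real.norm_eq_abs, abs_of_nonneg hc0]
  have d1 := descent hSconv hL ⟨hν0, hν1⟩ hgrad hhold hy hmem1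
  have s1 := subgrad hSconv hconv hx hmem1 (hgrad x hx)
  have d2 := descent hSconv hL ⟨hν0, hν1⟩ hgrad hhold hx hmem2
  have s2 := subgrad hSconv hconv hy hmem2 (hgrad y hy)
  have e1 : y - w - y = -w := by abel
  have e2 : x + w - x = w := by abel
  rw [e1] at d1; rw [e2] at d2
  have e3 : y - w - x = (y - x) - w := by abel
  rw [e3] at s1
  have e4 : x + w - y = -(y - x) + w := by abel
  rw [e4] at s2
  rw [inner_neg_right, norm_neg, hnw] at d1
  rw [hnw] at d2
  rw [inner_sub_right] at s1
  rw [inner_add_right, inner_neg_right] at s2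
  have key : ⟪u, y - x⟫_ℝ ≥ 2 * ⟪u, w⟫_ℝ - 2 * (L / (1 + ν) * (c * N) ^ (1 + ν)) := by
    have hgysub : ⟪g y, y - x⟫_ℝ - ⟪g x, y - x⟫_ℝ = ⟪u, y - x⟫_ℝ := by
      rw [hu, inner_sub_left]
    have hgwsub : ⟪g y, w⟫_ℝ - ⟪g x, w⟫_ℝ = ⟪u, w⟫_ℝ := by
      rw [hu, inner_sub_left]
    linarith [d1, s1, d2, s2]
  have hiw : ⟪u, w⟫_ℝ = c * N ^ (2 : ℕ) := by
    rw [hw, real_inner_smul_right, real_inner_self_eq_norm_sq, ← hN]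
  have h2cast : N ^ (2 : ℕ) = N ^ ((2 : ℕ) : ℝ) := (Real.rpow_natCast N 2).symm
  have hcN : c * N = M⁻¹ * N ^ (1 / ν) := by
    rw [hc]
    have h1 : N ^ ((1 - ν) / ν) * N = N ^ ((1 - ν) / ν + 1) := by
      rw [Real.rpow_add hN0, Real.rpow_one]
    have h2 : (1 - ν) / ν + 1 = 1 / ν := by field_simp; ring
    rw [mul_assoc, h1, h2]
  have hA : c * N ^ (2 : ℕ) = M⁻¹ * N ^ ((1 + ν) / ν) := by
    rw [hc, h2cast]
    have h1 : N ^ ((1 - ν) / ν) * N ^ ((2 : ℕ) : ℝ) = N ^ ((1 - ν) / ν + ((2 : ℕ) : ℝ)) := by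
      rw [Real.rpow_add hN0]
    have h2 : (1 - ν) / ν + ((2 : ℕ) : ℝ) = (1 + ν) / ν := by
      push_cast; field_simp; ring
    rw [mul_assoc, h1, h2]
  have hB : (c * N) ^ (1 + ν) = (M ^ (1 + ν))⁻¹ * N ^ ((1 + ν) / ν) := by
    rw [hcN, Real.mul_rpow (by positivity) (by positivity),
      Real.inv_rpow hM0.le, ← Real.rpow_mul hN0.le,
      show 1 / ν * (1 + ν) = (1 + ν) / ν by ring]
  have hMpow : M ^ (1 + ν) = L ^ ((1 + ν) / ν) := by
    rw [hM, ← Real.rpow_mul hL.le, show 1 / ν * (1 + ν) = (1 + ν) / ν by ring]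
  have hLM : L * (L ^ ((1 + ν) / ν))⁻¹ = M⁻¹ := by
    have h1 : L ^ ((1 + ν) / ν) = M * L := by
      rw [hM, show (1 + ν) / ν = 1 / ν + 1 by field_simp,
        Real.rpow_add hL, Real.rpow_one]
    rw [h1, mul_inv, ← mul_assoc, mul_comm L M⁻¹, mul_assoc,
      mul_inv_cancel₀ hL.ne']
    ring
  set P := N ^ ((1 + ν) / ν) with hP
  rw [hiw, hA] at key
  rw [hB, hMpow] at key
  have hfin : 2 * (M⁻¹ * P) - 2 * (L / (1 + ν) * ((L ^ ((1 + ν) / ν))⁻¹ * P)) =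
      2 * ν / ((1 + ν) * M) * P := by
    have h1 : L / (1 + ν) * ((L ^ ((1 + ν) / ν))⁻¹ * P) =
        L * (L ^ ((1 + ν) / ν))⁻¹ * P / (1 + ν) := by ring
    rw [h1, hLM]
    have h1ν : (1 : ℝ) + ν ≠ 0 := by linarith
    field_simp
    ring
  linarith [key, hfin.le, hfin.ge]
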